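/- Let {B_{a|x}} be a measurement assemblage, E a positive linear map, and ρ a density matrix with p = tr[E(ρ)] > 0. Then SR( E(ρ^{1/2} B ρ^{1/2}) / p ) ≤ IR(B). -/

import Mathlib

open Matrix Kronecker BigOperators ComplexOrder

noncomputable section

/-- A density matrix: positive semidefinite with unit trace. -/
def IsDensity {d : ℕ} (ρ : Matrix (Fin d) (Fin d) ℂ) : Prop :=
  ρ.PosSemidef ∧ ρ.trace = 1

/-- A POVM: positive semidefinite effects summing to the identity. -/
def IsPOVM {d nl : ℕ} (G : Fin nl → Matrix (Fin d) (Fin d) ℂ) : Prop :=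
  (∀ l, (G l).PosSemidef) ∧ ∑ l, G l = 1

/-- A measurement assemblage: for each setting `x`, a POVM `a ↦ M x a`. -/
def IsMA {d na nx : ℕ} (M : Fin nx → Fin na → Matrix (Fin d) (Fin d) ℂ) : Prop :=
  (∀ x a, (M x a).PosSemidef) ∧ ∀ x, ∑ a, M x a = 1

/-- Joint measurability: `M x a = ∑ λ p(a|x,λ) G λ` for a parent POVM `G`. -/
def JM {d na nx : ℕ} (M : Fin nx → Fin na → Matrix (Fin d) (Fin d) ℂ) : Prop :=
  ∃ (nl : ℕ) (G : Fin nl → Matrix (Fin d) (Fin d) ℂ)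
    (p : Fin nx → Fin na → Fin nl → ℝ),
    IsPOVM G ∧ (∀ x a l, 0 ≤ p x a l) ∧ (∀ x l, ∑ a, p x a l = 1) ∧
    ∀ x a, M x a = ∑ l, (p x a l : ℂ) • G l

/-- A state assemblage: PSD elements with an `x`-independent reduced density matrix. -/
def IsSA {d na nx : ℕ} (σ : Fin nx → Fin na → Matrix (Fin d) (Fin d) ℂ) : Prop :=
  (∀ x a, (σ x a).PosSemidef) ∧
  ∃ ρ : Matrix (Fin d) (Fin d) ℂ, IsDensity ρ ∧ ∀ x, ∑ a, σ x a = ρ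

/-- Local-hidden-state model: `σ x a = ∑ λ q(λ) p(a|x,λ) ρ_λ`. -/
def LHS {d na nx : ℕ} (σ : Fin nx → Fin na → Matrix (Fin d) (Fin d) ℂ) : Prop :=
  ∃ (nl : ℕ) (q : Fin nl → ℝ) (p : Fin nx → Fin na → Fin nl → ℝ)
    (ρ : Fin nl → Matrix (Fin d) (Fin d) ℂ),
    (∀ l, 0 ≤ q l) ∧ (∑ l, q l = 1) ∧
    (∀ x a l, 0 ≤ p x a l) ∧ (∀ x l, ∑ a, p x a l = 1) ∧
    (∀ l, IsDensity (ρ l)) ∧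
    ∀ x a, σ x a = ∑ l, ((q l * p x a l : ℝ) : ℂ) • ρ l

/-- Incompatibility robustness. -/
def IR {d na nx : ℕ} (B : Fin nx → Fin na → Matrix (Fin d) (Fin d) ℂ) : ℝ :=
  sInf {t : ℝ | 0 ≤ t ∧ ∃ N, IsMA N ∧
    JM (fun x a => (((1 + t : ℝ))⁻¹ : ℂ) • (B x a + (t : ℂ) • N x a))}

/-- Steering robustness. -/
def SR {d na nx : ℕ} (σ : Fin nx → Fin na → Matrix (Fin d) (Fin d) ℂ) : ℝ :=
  sInf {t : ℝ | 0 ≤ t ∧ ∃ ξ, IsSA ξ ∧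
    LHS (fun x a => (((1 + t : ℝ))⁻¹ : ℂ) • (σ x a + (t : ℂ) • ξ x a))}

/-- Incompatible weight. -/
def IW {d na nx : ℕ} (B : Fin nx → Fin na → Matrix (Fin d) (Fin d) ℂ) : ℝ :=
  sInf {t : ℝ | 0 ≤ t ∧ t ≤ 1 ∧ ∃ N O, IsMA N ∧ JM O ∧
    ∀ x a, B x a = (t : ℂ) • N x a + ((1 - t : ℝ) : ℂ) • O x a}

/-- Steerable weight. -/
def SW {d na nx : ℕ} (σ : Fin nx → Fin na → Matrix (Fin d) (Fin d) ℂ) : ℝ :=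
  sInf {t : ℝ | 0 ≤ t ∧ t ≤ 1 ∧ ∃ ξ τ, IsSA ξ ∧ LHS τ ∧
    ∀ x a, σ x a = (t : ℂ) • ξ x a + ((1 - t : ℝ) : ℂ) • τ x a}

/-- Positive map on matrices. -/
def PosMap {d : ℕ} (E : Matrix (Fin d) (Fin d) ℂ →ₗ[ℂ] Matrix (Fin d) (Fin d) ℂ) : Prop :=
  ∀ X, X.PosSemidef → (E X).PosSemidef

/-- Trace-nonincreasing on PSD matrices. -/
def TNI {d : ℕ} (E : Matrix (Fin d) (Fin d) ℂ →ₗ[ℂ] Matrix (Fin d) (Fin d) ℂ) : Prop :=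
  ∀ X : Matrix (Fin d) (Fin d) ℂ, X.PosSemidef → (E X).trace.re ≤ X.trace.re

/-- `Ed` is the Hilbert–Schmidt adjoint of `E`. -/
def IsAdjoint {d : ℕ} (E Ed : Matrix (Fin d) (Fin d) ℂ →ₗ[ℂ] Matrix (Fin d) (Fin d) ℂ) : Prop :=
  ∀ X Y, ((E X)ᴴ * Y).trace = (Xᴴ * (Ed Y)).trace

/-- Partial trace over the first tensor factor. -/
def ptraceA {d d' : ℕ} (M : Matrix (Fin d × Fin d') (Fin d × Fin d') ℂ) :
    Matrix (Fin d') (Fin d') ℂ :=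
  Matrix.of fun i j => ∑ k : Fin d, M (k, i) (k, j)

/-- The map `E ⊗ id` acting on bipartite matrices. -/
def tensId {d d' : ℕ} (E : Matrix (Fin d) (Fin d) ℂ →ₗ[ℂ] Matrix (Fin d) (Fin d) ℂ)
    (M : Matrix (Fin d × Fin d') (Fin d × Fin d') ℂ) :
    Matrix (Fin d × Fin d') (Fin d × Fin d') ℂ :=
  Matrix.of fun p q => E (Matrix.of fun i k => M (i, p.2) (k, q.2)) p.1 q.1

/-- Square root of a PSD matrix, as `Matrix.PosSemidef.sqrt` was defined in older Mathlib. -/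
def Matrix.PosSemidef.sqrt {n : Type*} [Fintype n] [DecidableEq n] {A : Matrix n n ℂ}
    (hA : A.PosSemidef) : Matrix n n ℂ :=
  hA.1.eigenvectorUnitary.1 * diagonal ((↑) ∘ Real.sqrt ∘ hA.1.eigenvalues) *
    (star hA.1.eigenvectorUnitary : Matrix n n ℂ)

lemma Matrix.PosSemidef.posSemidef_sqrt {n : Type*} [Fintype n] [DecidableEq n]
    {A : Matrix n n ℂ} (hA : A.PosSemidef) : hA.sqrt.PosSemidef := by
  unfold Matrix.PosSemidef.sqrt
  have hD : (diagonal ((↑) ∘ Real.sqrt ∘ hA.1.eigenvalues) : Matrix n n ℂ).PosSemidef := by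
    rw [posSemidef_diagonal_iff]
    intro i
    exact Complex.zero_le_real.mpr (Real.sqrt_nonneg _)
  have := hD.mul_mul_conjTranspose_same (hA.1.eigenvectorUnitary : Matrix n n ℂ)
  simpa [Matrix.star_eq_conjTranspose] using this

lemma Matrix.PosSemidef.sqrt_mul_self {n : Type*} [Fintype n] [DecidableEq n]
    {A : Matrix n n ℂ} (hA : A.PosSemidef) : hA.sqrt * hA.sqrt = A := by
  unfold Matrix.PosSemidef.sqrt
  conv_rhs => rw [hA.1.spectral_theorem]
  rw [Unitary.conjStarAlgAut_apply]
  have hU : (star hA.1.eigenvectorUnitary : Matrix n n ℂ) * hA.1.eigenvectorUnitary.1 = 1 :=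
    Unitary.star_mul_self_of_mem hA.1.eigenvectorUnitary.2
  have hDD : (diagonal ((↑) ∘ Real.sqrt ∘ hA.1.eigenvalues) : Matrix n n ℂ) *
      diagonal ((↑) ∘ Real.sqrt ∘ hA.1.eigenvalues) =
      diagonal (RCLike.ofReal ∘ hA.1.eigenvalues) := by
    rw [diagonal_mul_diagonal]
    congr 1
    funext i
    simp only [Function.comp_apply]
    rw [← Complex.ofReal_mul, Real.mul_self_sqrt (hA.eigenvalues_nonneg i)]
    rfl
  calc _ = hA.1.eigenvectorUnitary.1 * (diagonal ((↑) ∘ Real.sqrt ∘ hA.1.eigenvalues) *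
        ((star hA.1.eigenvectorUnitary : Matrix n n ℂ) * hA.1.eigenvectorUnitary.1) *
        diagonal ((↑) ∘ Real.sqrt ∘ hA.1.eigenvalues)) *
        (star hA.1.eigenvectorUnitary : Matrix n n ℂ) := by simp only [Matrix.mul_assoc]
    _ = _ := by rw [hU, Matrix.mul_one, hDD]


section Helpers
open ComplexOrder
variable {d : ℕ}

lemma psd_smul_real {A : Matrix (Fin d) (Fin d) ℂ} (hA : A.PosSemidef) {c : ℝ} (hc : 0 ≤ c) :
    ((c : ℂ) • A).PosSemidef := by
  constructor
  · unfold Matrix.IsHermitian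
    rw [conjTranspose_smul, hA.1.eq]
    norm_num
  · intro v
    exact (hA.smul (a := (c : ℂ)) (by exact_mod_cast hc)).2 v

lemma psd_diag_nonneg {A : Matrix (Fin d) (Fin d) ℂ} (hA : A.PosSemidef) (i : Fin d) :
    0 ≤ A i i := by
  exact hA.diag_nonneg

lemma psd_trace_real {A : Matrix (Fin d) (Fin d) ℂ} (hA : A.PosSemidef) :
    A.trace = (A.trace.re : ℂ) := by
  have h := Matrix.trace_conjTranspose A
  rw [hA.1.eq] at h
  have him : A.trace.im = 0 := by
    have := congrArg Complex.im h
    simp at this; linarith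
  exact Complex.ext rfl (by simp [him])

lemma psd_trace_re_nonneg {A : Matrix (Fin d) (Fin d) ℂ} (hA : A.PosSemidef) :
    0 ≤ A.trace.re := by
  have h : (0:ℂ) ≤ A.trace := by
    unfold Matrix.trace
    exact Finset.sum_nonneg fun i _ => psd_diag_nonneg hA i
  exact h.1

lemma psd_trace_zero {A : Matrix (Fin d) (Fin d) ℂ} (hA : A.PosSemidef)
    (h : A.trace = 0) : A = 0 := by
  set S := hA.sqrt with hS
  have hherm : Sᴴ = S := hA.posSemidef_sqrt.1.eq
  have hmul : Sᴴ * S = A := by rw [hherm]; exact hA.sqrt_mul_self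
  have htr : (Sᴴ * S).trace = ((∑ i, ∑ j, Complex.normSq (S j i) : ℝ) : ℂ) := by
    simp only [Matrix.trace, Matrix.diag, Matrix.mul_apply, Matrix.conjTranspose_apply]
    push_cast
    congr 1; funext i; congr 1; funext j
    exact (Complex.normSq_eq_conj_mul_self (z := S j i)).symm
  rw [hmul, h] at htr
  have h0 : ∑ i, ∑ j, Complex.normSq (S j i) = 0 := by exact_mod_cast htr.symm
  have hz : S = 0 := by
    ext j i
    have h1 := (Finset.sum_eq_zero_iff_of_nonneg (fun i _ =>
      Finset.sum_nonneg fun j _ => Complex.normSq_nonneg _)).mp h0 i (Finset.mem_univ i)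
    have h2 := (Finset.sum_eq_zero_iff_of_nonneg (fun j _ =>
      Complex.normSq_nonneg _)).mp h1 j (Finset.mem_univ j)
    simpa [Complex.normSq_eq_zero] using h2
  rw [← hmul, hz]; simp

lemma psd_sum {ι : Type*} (s : Finset ι) (f : ι → Matrix (Fin d) (Fin d) ℂ)
    (hf : ∀ i ∈ s, (f i).PosSemidef) : (∑ i ∈ s, f i).PosSemidef := by
  classical
  induction s using Finset.induction_on with
  | empty => simpa using Matrix.PosSemidef.zero
  | @insert a s' ha ih =>
    rw [Finset.sum_insert ha]
    exact (hf a (Finset.mem_insert_self a s')).add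
      (ih fun i hi => hf i (Finset.mem_insert_of_mem hi))

/-- The filtering map as a linear map. -/
def filterMap {d : ℕ} (E : Matrix (Fin d) (Fin d) ℂ →ₗ[ℂ] Matrix (Fin d) (Fin d) ℂ)
    (R : Matrix (Fin d) (Fin d) ℂ) (c : ℝ) :
    Matrix (Fin d) (Fin d) ℂ →ₗ[ℂ] Matrix (Fin d) (Fin d) ℂ where
  toFun X := (c : ℂ) • E (R * X * R)
  map_add' X Y := by simp [Matrix.mul_add, Matrix.add_mul, smul_add]
  map_smul' a X := by
    simp only [Matrix.mul_smul, Matrix.smul_mul, E.map_smul, RingHom.id_apply]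
    exact smul_comm _ _ _

lemma ir_set_nonempty {d na nx : ℕ} (hd : d ≠ 0)
    (B : Fin nx → Fin na → Matrix (Fin d) (Fin d) ℂ) (hB : IsMA B) :
    {t : ℝ | 0 ≤ t ∧ ∃ N, IsMA N ∧
      JM (fun x a => (((1 + t : ℝ))⁻¹ : ℂ) • (B x a + (t : ℂ) • N x a))}.Nonempty := by
  have i0 : Fin d := ⟨0, Nat.pos_of_ne_zero hd⟩
  by_cases htriv : ∀ x a, B x a = 1
  · -- trivial case: B is the trivial assemblage, take t = 0
    refine ⟨0, le_refl 0, B, hB, 1, (fun _ => 1), (fun _ _ _ => 1),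
      ⟨fun _ => Matrix.PosSemidef.one, by simp⟩, fun _ _ _ => zero_le_one, ?_, ?_⟩
    · intro x l
      have hna : na = 1 := by
        have h2 := congrArg (fun M => M i0 i0) (hB.2 x)
        simp only [Matrix.sum_apply, htriv, Matrix.one_apply_eq] at h2
        have : ((na : ℕ) : ℂ) = 1 := by simpa using h2
        exact_mod_cast this
      subst hna
      simp
    · intro x a
      have : B x a = 1 := htriv x a
      simp [this]
  · push_neg at htriv
    obtain ⟨x0, a0, hx0⟩ := htriv
    have hna2 : 2 ≤ na := by
      rcases na with _ | _ | n
      · exact a0.elim0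
      · exfalso
        apply hx0
        rw [show a0 = ⟨0, Nat.zero_lt_one⟩ from Fin.ext (by omega)]
        simpa using hB.2 x0
      · omega
    have hnaR : (1:ℝ) ≤ (na : ℝ) - 1 := by
      have : (2:ℝ) ≤ (na:ℝ) := by exact_mod_cast hna2
      linarith
    have ht0 : (0:ℝ) ≤ (na : ℝ) - 1 := by linarith
    have htne : ((na:ℝ) - 1) ≠ 0 := by linarith
    have hnane : (na:ℝ) ≠ 0 := by
      have : (2:ℝ) ≤ (na:ℝ) := by exact_mod_cast hna2
      linarith
    have htneC : ((na:ℂ) - 1) ≠ 0 := by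
      have h := Complex.ofReal_ne_zero.mpr htne
      push_cast at h
      exact h
    refine ⟨(na:ℝ) - 1, ht0,
      (fun x a => ((((na:ℝ) - 1)⁻¹ : ℝ) : ℂ) • ∑ a' ∈ Finset.univ.erase a, B x a'),
      ⟨?_, ?_⟩, ?_⟩
    · intro x a
      exact psd_smul_real (psd_sum _ _ fun a' _ => hB.1 x a') (inv_nonneg.mpr ht0)
    · intro x
      have hsum : ∑ a' : Fin na, B x a' = 1 := hB.2 x
      have hkey : ∑ a : Fin na, ∑ a' ∈ Finset.univ.erase a, B x a'
          = ((na:ℂ) - 1) • (1 : Matrix (Fin d) (Fin d) ℂ) := by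
        have h1 : ∀ a : Fin na, ∑ a' ∈ Finset.univ.erase a, B x a' = 1 - B x a := by
          intro a
          rw [Finset.sum_erase_eq_sub (Finset.mem_univ a), hsum]
        rw [Finset.sum_congr rfl (fun a _ => h1 a), Finset.sum_sub_distrib, hsum,
          Finset.sum_const, Finset.card_univ, Fintype.card_fin,
          ← Nat.cast_smul_eq_nsmul ℂ, sub_smul, one_smul]
      rw [← Finset.smul_sum, hkey, smul_smul,
        show ((((na:ℝ) - 1)⁻¹ : ℝ) : ℂ) * ((na:ℂ) - 1) = 1 by
          push_cast
          exact inv_mul_cancel₀ htneC,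
        one_smul]
    · refine ⟨1, fun _ => 1, fun _ _ _ => (na:ℝ)⁻¹,
        ⟨fun _ => Matrix.PosSemidef.one, by simp⟩,
        fun _ _ _ => inv_nonneg.mpr (by positivity), ?_, ?_⟩
      · intro x l
        rw [Finset.sum_const, Finset.card_univ, Fintype.card_fin, nsmul_eq_mul]
        field_simp
      · intro x a
        show ((1 + ((na:ℝ) - 1) : ℝ)⁻¹ : ℂ) • (B x a + ((((na:ℝ) - 1) : ℝ) : ℂ) •
            (((((na:ℝ) - 1)⁻¹ : ℝ)) : ℂ) • ∑ a' ∈ Finset.univ.erase a, B x a') =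
            ∑ _l : Fin 1, (((na:ℝ)⁻¹ : ℝ) : ℂ) • (1 : Matrix (Fin d) (Fin d) ℂ)
        rw [smul_smul, show ((((na:ℝ) - 1) : ℝ) : ℂ) * (((((na:ℝ) - 1)⁻¹ : ℝ)) : ℂ) = 1 by
            push_cast; exact mul_inv_cancel₀ htneC, one_smul,
          Finset.add_sum_erase _ _ (Finset.mem_univ a), hB.2 x, Fin.sum_univ_one]
        congr 1
        push_cast
        norm_num
end Helpers

/-- SR(E(ρ^{1/2} B ρ^{1/2})/p) ≤ IR(B) for a positive map E. -/
theorem sr_filtered_schrodinger_le_ir {d na nx : ℕ}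
    (B : Fin nx → Fin na → Matrix (Fin d) (Fin d) ℂ) (hB : IsMA B)
    (E : Matrix (Fin d) (Fin d) ℂ →ₗ[ℂ] Matrix (Fin d) (Fin d) ℂ) (hE : PosMap E)
    (ρ : Matrix (Fin d) (Fin d) ℂ) (hρ : ρ.PosSemidef) (hρ1 : ρ.trace = 1)
    (hp : 0 < (E ρ).trace.re) :
    SR (fun x a => ((((E ρ).trace.re)⁻¹ : ℝ) : ℂ) •
        E (hρ.sqrt * B x a * hρ.sqrt)) ≤ IR B := by
  have hd : d ≠ 0 := by
    intro h
    subst h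
    rw [Matrix.trace_eq_zero_of_isEmpty] at hρ1
    exact one_ne_zero hρ1.symm
  set p : ℝ := (E ρ).trace.re with hpdef
  set L := filterMap E hρ.sqrt p⁻¹ with hLdef
  have hLapp : ∀ X, L X = ((p⁻¹ : ℝ) : ℂ) • E (hρ.sqrt * X * hρ.sqrt) := fun _ => rfl
  have hLpsd : ∀ X : Matrix (Fin d) (Fin d) ℂ, X.PosSemidef → (L X).PosSemidef := by
    intro X hX
    rw [hLapp]
    have h1 : (hρ.sqrt * X * hρ.sqrtᴴ).PosSemidef := hX.mul_mul_conjTranspose_same hρ.sqrt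
    rw [hρ.posSemidef_sqrt.1.eq] at h1
    exact psd_smul_real (hE _ h1) (inv_nonneg.mpr hp.le)
  have hL1 : IsDensity (L 1) := by
    have hL1eq : L 1 = ((p⁻¹ : ℝ) : ℂ) • E ρ := by
      rw [hLapp, Matrix.mul_one, hρ.sqrt_mul_self]
    constructor
    · exact hLpsd 1 Matrix.PosSemidef.one
    · rw [hL1eq, Matrix.trace_smul, psd_trace_real (hE ρ hρ), ← hpdef, smul_eq_mul]
      push_cast
      field_simp
  apply csInf_le_csInf
  · exact ⟨0, fun t ht => ht.1⟩
  · exact ir_set_nonempty hd B hB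
  · rintro t ⟨ht0, N, hN, nl, G, pr, hG, hpr0, hpr1, hMG⟩
    refine ⟨ht0, fun x a => L (N x a), ⟨fun x a => hLpsd _ (hN.1 x a), L 1, hL1, ?_⟩, ?_⟩
    · intro x
      rw [← map_sum, hN.2 x]
    · show LHS (fun x a => (((1 + t : ℝ))⁻¹ : ℂ) • (L (B x a) + (t : ℂ) • L (N x a)))
      have hfun : (fun x a => (((1 + t : ℝ))⁻¹ : ℂ) • (L (B x a) + (t : ℂ) • L (N x a)))
          = fun x a => L ((((1 + t : ℝ))⁻¹ : ℂ) • (B x a + (t : ℂ) • N x a)) := by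
        funext x a
        rw [L.map_smul, L.map_add, L.map_smul]
      rw [hfun]
      refine ⟨nl, fun l => (L (G l)).trace.re, pr,
        fun l => if (L (G l)).trace.re = 0 then L 1
          else ((((L (G l)).trace.re)⁻¹ : ℝ) : ℂ) • L (G l),
        fun l => psd_trace_re_nonneg (hLpsd _ (hG.1 l)), ?_, hpr0, hpr1, ?_, ?_⟩
      · have hc : ((∑ l, (L (G l)).trace.re : ℝ) : ℂ) = 1 := by
          push_cast
          rw [Finset.sum_congr rfl (fun l _ => (psd_trace_real (hLpsd _ (hG.1 l))).symm),
            ← Matrix.trace_sum, ← map_sum, hG.2]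
          exact hL1.2
        exact_mod_cast hc
      · intro l
        by_cases h : (L (G l)).trace.re = 0
        · simp only [if_pos h]; exact hL1
        · simp only [if_neg h]
          constructor
          · exact psd_smul_real (hLpsd _ (hG.1 l))
              (inv_nonneg.mpr (psd_trace_re_nonneg (hLpsd _ (hG.1 l))))
          · rw [Matrix.trace_smul, psd_trace_real (hLpsd _ (hG.1 l)), smul_eq_mul]
            push_cast
            simp only [Complex.ofReal_re]
            field_simp
      · intro x a
        have hM := hMG x a
        simp only at hM
        beta_reduce
        rw [hM, map_sum]
        refine Finset.sum_congr rfl fun l _ => ?_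
        rw [L.map_smul]
        by_cases h : (L (G l)).trace.re = 0
        · have hz : L (G l) = 0 := psd_trace_zero (hLpsd _ (hG.1 l))
            (by rw [psd_trace_real (hLpsd _ (hG.1 l)), h]; simp)
          simp only [if_pos h, hz, h]
          simp
        · simp only [if_neg h]; rw [smul_smul]
          congr 1
          push_cast
          have hne : ((L (G l)).trace.re : ℂ) ≠ 0 := by exact_mod_cast h
          field_simp
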